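/- arXiv:1901.07477 — 2 statements merged into one kernel-verified Lean document; each statement's English description precedes it below -/
import Mathlib

section
/- Let B be a C*-algebra, μ a state on B, and a₁, a₂ ∈ B contractions (‖aᵢ‖ ≤ 1). Set cᵢ := 1 − Re μ(aᵢ) for i = 1, 2. Then 1 − Re μ(a₁a₂) ≤ c₁ + c₂ + 2√(c₁c₂). -/
open scoped ComplexOrder

section approx
variable {B : Type*} [NonUnitalNormedRing B] [StarRing B] [CStarRing B]
    [NormedSpace ℂ B] [IsScalarTower ℂ B B] [SMulCommClass ℂ B B] [StarModule ℂ B]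
    [CompleteSpace B]

lemma my_approx (a₁ a₂ : B) {δ : ℝ} (hδ : 0 < δ) :
    ∃ e : B, star e = e ∧ ‖e‖ ≤ 1 ∧ ‖e * a₂ - a₂‖ ≤ δ ∧ ‖e * star a₁ - star a₁‖ ≤ δ := by
  letI : NonUnitalCStarAlgebra B := {}
  letI := CStarAlgebra.spectralOrder (Unitization ℂ B)
  haveI := CStarAlgebra.spectralOrderedRing (Unitization ℂ B)
  obtain ⟨n, hn⟩ := exists_nat_gt (1 / δ ^ 2)
  have hn0 : (0:ℝ) < n := lt_trans (by positivity) hn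
  have hinv : (1:ℝ) / n ≤ δ ^ 2 := by
    rw [div_le_iff₀ hn0]
    rw [div_lt_iff₀ (by positivity)] at hn
    nlinarith
  set ν : ℝ := (n : ℝ) with hν
  set g : ℝ → ℝ := fun t => min (ν * t) 1 with hgdef
  have hg : Continuous g := (continuous_const.mul continuous_id).min continuous_const
  have hg0 : g 0 = 0 := by simp [hgdef]
  set h : B := star a₁ * a₁ + a₂ * star a₂ with hh
  set H : Unitization ℂ B := (h : Unitization ℂ B) with hH
  have hHsplit : H = star (a₁ : Unitization ℂ B) * (a₁ : Unitization ℂ B)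
      + (a₂ : Unitization ℂ B) * star (a₂ : Unitization ℂ B) := by
    rw [hH, hh]
    simp [Unitization.inr_add, Unitization.inr_mul, Unitization.inr_star]
  have hHpos : 0 ≤ H := by
    rw [hHsplit]
    exact add_nonneg (star_mul_self_nonneg _) (mul_star_self_nonneg _)
  have hHsa : IsSelfAdjoint H := .of_nonneg hHpos
  have hspec : ∀ t ∈ spectrum ℝ H, 0 ≤ t := fun t ht => spectrum_nonneg_of_nonneg hHpos ht
  set e : B := cfcₙ g h with he
  have he_inr : (e : Unitization ℂ B) = cfc g H := by
    rw [he, Unitization.real_cfcₙ_eq_cfc_inr h g hg0]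
  have hesa : IsSelfAdjoint e := by rw [he]; exact cfcₙ_predicate g h
  have henorm : ‖e‖ ≤ 1 := by
    rw [← Unitization.norm_inr (𝕜 := ℂ), he_inr]
    refine norm_cfc_le zero_le_one fun t ht => ?_
    have ht0 := hspec t ht
    rw [Real.norm_eq_abs, abs_le]
    constructor
    · exact le_trans (by norm_num : (-1:ℝ) ≤ 0) (le_min (by positivity) zero_le_one)
    · exact min_le_right _ _
  set u : Unitization ℂ B := cfc (fun t => 1 - g t) H with hu
  have husa : IsSelfAdjoint u := by rw [hu]; exact cfc_predicate _ H
  have hu_eq : u = 1 - cfc g H := by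
    rw [hu, cfc_sub (fun _ => (1:ℝ)) g H (by fun_prop) (by fun_prop), cfc_const_one ℝ H]
  have hkey : ‖u * H * u‖ ≤ 1 / ν := by
    have hmul : u * H * u = cfc (fun t => (1 - g t) * t * (1 - g t)) H := by
      rw [show (fun t : ℝ => (1 - g t) * t * (1 - g t))
            = fun t => ((fun s => (1 - g s) * s) t) * ((fun s => 1 - g s) t) from rfl,
        cfc_mul _ _ H (by fun_prop) (by fun_prop),
        show (fun t : ℝ => (1 - g t) * t)
            = fun t => ((fun s => 1 - g s) t) * (id t) from rfl,
        cfc_mul _ _ H (by fun_prop) (by fun_prop), cfc_id ℝ H]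
    rw [hmul]
    refine norm_cfc_le (by positivity) fun t ht => ?_
    have ht0 := hspec t ht
    rw [Real.norm_eq_abs]
    rcases le_or_gt (ν * t) 1 with hc | hc
    · have hgt : g t = ν * t := min_eq_left hc
      have hx1 : 0 ≤ 1 - ν * t := by linarith
      have hx2 : t ≤ 1 / ν := by rw [le_div_iff₀ hn0]; nlinarith
      have hx3 : (1 - ν * t) * t * (1 - ν * t) ≤ t := by
        nlinarith [mul_nonneg (mul_nonneg ht0 (by positivity : (0:ℝ) ≤ ν * t))
          (by linarith : (0:ℝ) ≤ 2 - ν * t)]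
      have hx0 : 0 ≤ (1 - ν * t) * t * (1 - ν * t) := by positivity
      rw [hgt, abs_of_nonneg hx0]
      linarith
    · have hgt : g t = 1 := min_eq_right hc.le
      rw [hgt]
      simp only [sub_self, zero_mul, mul_zero, abs_zero]
      positivity
  have main : ∀ z : B, ((z : Unitization ℂ B) * star (z : Unitization ℂ B) ≤ H) →
      ‖e * z - z‖ ≤ δ := by
    intro z hz
    have h1 : ((e * z - z : B) : Unitization ℂ B) = -(u * (z : Unitization ℂ B)) := by
      rw [hu_eq, ← he_inr, Unitization.inr_sub, Unitization.inr_mul]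
      rw [sub_mul, one_mul, neg_sub]
    have h2 : ‖e * z - z‖ ^ 2 = ‖u * ((z : Unitization ℂ B) * star (z : Unitization ℂ B)) * u‖ := by
      have := CStarRing.norm_self_mul_star (x := (e * z - z : B))
      rw [← Unitization.norm_inr (𝕜 := ℂ) ((e * z - z) * star (e * z - z))] at this
      have hrw : (((e * z - z) * star (e * z - z) : B) : Unitization ℂ B)
          = u * ((z : Unitization ℂ B) * star (z : Unitization ℂ B)) * u := by
        rw [Unitization.inr_mul, Unitization.inr_star, h1]
        simp only [star_neg, neg_mul, mul_neg, neg_neg, star_mul, husa.star_eq, mul_assoc]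
      rw [hrw] at this
      rw [sq, ← this]
    have h0 : 0 ≤ u * ((z : Unitization ℂ B) * star (z : Unitization ℂ B)) * u := by
      have := star_mul_self_nonneg (star (z : Unitization ℂ B) * u)
      simpa [star_mul, husa.star_eq, mul_assoc] using this
    have hle : u * ((z : Unitization ℂ B) * star (z : Unitization ℂ B)) * u ≤ u * H * u := by
      have := star_left_conjugate_le_conjugate hz u
      rwa [husa.star_eq] at this
    have hnorm2 : ‖e * z - z‖ ^ 2 ≤ δ ^ 2 := by
      rw [h2]
      calc ‖u * ((z : Unitization ℂ B) * star (z : Unitization ℂ B)) * u‖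
          ≤ ‖u * H * u‖ := CStarAlgebra.norm_le_norm_of_nonneg_of_le h0 hle
        _ ≤ 1 / ν := hkey
        _ ≤ δ ^ 2 := hinv
    nlinarith [norm_nonneg (e * z - z)]
  refine ⟨e, hesa.star_eq, henorm, main a₂ ?_, main (star a₁) ?_⟩
  · rw [hHsplit]
    exact le_add_of_nonneg_left (star_mul_self_nonneg _)
  · rw [hHsplit]
    simp only [Unitization.inr_star, star_star]
    exact le_add_of_nonneg_right (mul_star_self_nonneg _)
end approx

section herm
variable {B : Type*} [NonUnitalNormedRing B] [StarRing B] [CStarRing B]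
    [NormedSpace ℂ B] [IsScalarTower ℂ B B] [SMulCommClass ℂ B B] [StarModule ℂ B]
    [CompleteSpace B]
    (μ : B →L[ℂ] ℂ) (hμ_pos : ∀ a : B, 0 ≤ μ (star a * a))

include hμ_pos in
lemma my_herm (x y : B) : μ (star y * x) = starRingEnd ℂ (μ (star x * y)) := by
  have him : ∀ z : B, (μ (star z * z)).im = 0 := by
    intro z
    have := hμ_pos z
    rw [Complex.le_def] at this
    simpa using this.2.symm
  have expand : ∀ (c : ℂ) (x y : B), μ (star (x + c • y) * (x + c • y)) =
      μ (star x * x) + c * μ (star x * y) + (starRingEnd ℂ c) * μ (star y * x)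
        + (starRingEnd ℂ c * c) * μ (star y * y) := by
    intro c x y
    simp only [star_add, star_smul, add_mul, mul_add, smul_mul_assoc, mul_smul_comm, map_add,
      map_smul, smul_eq_mul, starRingEnd_apply]
    ring
  have h1 : (μ (star x * y) + μ (star y * x)).im = 0 := by
    have h := him (x + (1 : ℂ) • y)
    rw [expand] at h
    simp only [map_one, one_mul, Complex.add_im] at h ⊢
    have hx := him x; have hy := him y
    linarith
  have h2 : (μ (star x * y)).re = (μ (star y * x)).re := by
    have h := him (x + Complex.I • y)
    rw [expand] at h
    simp only [Complex.conj_I, Complex.add_im, Complex.mul_im, Complex.I_re, Complex.I_im,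
      Complex.neg_re, Complex.neg_im, neg_mul, one_mul, zero_mul] at h
    have hx := him x; have hy := him y
    simp only [Complex.I_mul_I, Complex.neg_re, Complex.neg_im, Complex.one_re] at h
    linarith
  apply Complex.ext
  · simpa [Complex.conj_re] using h2.symm
  · have := h1
    simp only [Complex.add_im] at this
    simp only [Complex.conj_im]
    linarith
end herm

section cs
variable {B : Type*} [NonUnitalNormedRing B] [StarRing B] [CStarRing B]
    [NormedSpace ℂ B] [IsScalarTower ℂ B B] [SMulCommClass ℂ B B] [StarModule ℂ B]
    [CompleteSpace B]
    (μ : B →L[ℂ] ℂ) (hμ_pos : ∀ a : B, 0 ≤ μ (star a * a))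

include hμ_pos in
lemma my_cs (x y : B) :
    ‖μ (star x * y)‖ ^ 2 ≤ (μ (star x * x)).re * (μ (star y * y)).re := by
  letI core : PreInnerProductSpace.Core ℂ B :=
  { inner := fun x y => μ (star x * y)
    conj_inner_symm := fun x y => by
      show starRingEnd ℂ (μ (star y * x)) = μ (star x * y)
      rw [show μ (star y * x) = starRingEnd ℂ (μ (star x * y)) from my_herm μ hμ_pos x y,
        Complex.conj_conj]
    re_inner_nonneg := fun z => by
      have := hμ_pos z
      rw [Complex.le_def] at this
      simpa using this.1
    add_left := fun x y z => by simp [star_add, add_mul]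
    smul_left := fun x y r => by
      simp [star_smul, smul_mul_assoc, map_smul, smul_eq_mul] }
  letI : Inner ℂ B := InnerProductSpace.Core.toPreInner' (c := core)
  have key := InnerProductSpace.Core.inner_mul_inner_self_le (𝕜 := ℂ) (F := B) x y
  have h1 : (inner ℂ y x : ℂ) = starRingEnd ℂ (inner ℂ x y : ℂ) := (core.conj_inner_symm y x).symm
  rw [h1, RCLike.norm_conj] at key
  have h2 : (inner ℂ x y : ℂ) = μ (star x * y) := rfl
  have h3 : (inner ℂ x x : ℂ) = μ (star x * x) := rfl
  have h4 : (inner ℂ y y : ℂ) = μ (star y * y) := rfl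
  rw [h2, h3, h4] at key
  simpa [sq] using key
end cs

set_option maxHeartbeats 1000000 in
/-- For a state `μ` on a C*-algebra `B` and contractions `a₁ a₂`, with
`cᵢ = 1 - Re μ(aᵢ)`, one has `1 - Re μ(a₁a₂) ≤ c₁ + c₂ + 2√(c₁c₂)`. -/
theorem stmt0 {B : Type*} [NonUnitalNormedRing B] [StarRing B] [CStarRing B]
    [NormedSpace ℂ B] [IsScalarTower ℂ B B] [SMulCommClass ℂ B B] [StarModule ℂ B]
    [CompleteSpace B]
    (μ : B →L[ℂ] ℂ) (hμ_pos : ∀ a : B, 0 ≤ μ (star a * a)) (hμ_norm : ‖μ‖ = 1)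
    (a₁ a₂ : B) (ha₁ : ‖a₁‖ ≤ 1) (ha₂ : ‖a₂‖ ≤ 1) :
    1 - (μ (a₁ * a₂)).re ≤
      (1 - (μ a₁).re) + (1 - (μ a₂).re) +
        2 * Real.sqrt ((1 - (μ a₁).re) * (1 - (μ a₂).re)) := by
  have hμ_le : ∀ x : B, ‖μ x‖ ≤ ‖x‖ := fun x => by
    calc ‖μ x‖ ≤ ‖μ‖ * ‖x‖ := μ.le_opNorm x
      _ = ‖x‖ := by rw [hμ_norm, one_mul]
  have habs : ∀ x : B, |(μ x).re| ≤ ‖x‖ := fun x => by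
    refine (Complex.abs_re_le_norm _).trans ?_
    exact hμ_le x
  set c₁ := 1 - (μ a₁).re with hc₁def
  set c₂ := 1 - (μ a₂).re with hc₂def
  have hc₁ : 0 ≤ c₁ := by have := (abs_le.mp (habs a₁)).2; rw [hc₁def]; linarith
  have hc₂ : 0 ≤ c₂ := by have := (abs_le.mp (habs a₂)).2; rw [hc₂def]; linarith
  have hc₁' : c₁ ≤ 2 := by have := (abs_le.mp (habs a₁)).1; rw [hc₁def]; linarith
  have hc₂' : c₂ ≤ 2 := by have := (abs_le.mp (habs a₂)).1; rw [hc₂def]; linarith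
  have hre0 : ∀ x : B, 0 ≤ (μ (star x * x)).re := fun x => by
    have := hμ_pos x; rw [Complex.le_def] at this
    simpa using this.1
  have key : ∀ δ : ℝ, 0 < δ →
      1 - (μ (a₁ * a₂)).re ≤ c₁ + c₂ + 2 * δ + 2 * Real.sqrt ((c₁ + δ) * (c₂ + δ)) := by
    intro δ hδ
    obtain ⟨e, hse, hne, h2, h1s⟩ := my_approx a₁ a₂ hδ
    have h1 : ‖a₁ * e - a₁‖ ≤ δ := by
      have heq : a₁ * e - a₁ = star (e * star a₁ - star a₁) := by
        rw [star_sub, star_mul, hse, star_star]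
      rw [heq, norm_star]
      exact h1s
    have hEe : (μ (e * e)).re ≤ 1 := by
      refine (abs_le.mp ((habs _).trans ?_)).2
      calc ‖e * e‖ ≤ ‖e‖ * ‖e‖ := norm_mul_le _ _
        _ ≤ 1 := by nlinarith [norm_nonneg e]
    have hq₁ : (μ (a₁ * star a₁)).re ≤ 1 := by
      refine (abs_le.mp ((habs _).trans ?_)).2
      calc ‖a₁ * star a₁‖ ≤ ‖a₁‖ * ‖star a₁‖ := norm_mul_le _ _
        _ ≤ 1 := by rw [norm_star]; nlinarith [norm_nonneg a₁]
    have hq₂ : (μ (star a₂ * a₂)).re ≤ 1 := by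
      refine (abs_le.mp ((habs _).trans ?_)).2
      calc ‖star a₂ * a₂‖ ≤ ‖star a₂‖ * ‖a₂‖ := norm_mul_le _ _
        _ ≤ 1 := by rw [norm_star]; nlinarith [norm_nonneg a₂]
    have hm₁ : |(μ (a₁ * e)).re - (μ a₁).re| ≤ δ := by
      have heq : (μ (a₁ * e)).re - (μ a₁).re = (μ (a₁ * e - a₁)).re := by
        rw [map_sub, Complex.sub_re]
      rw [heq]
      exact (habs _).trans h1
    have hm₂ : |(μ (e * a₂)).re - (μ a₂).re| ≤ δ := by
      have heq : (μ (e * a₂)).re - (μ a₂).re = (μ (e * a₂ - a₂)).re := by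
        rw [map_sub, Complex.sub_re]
      rw [heq]
      exact (habs _).trans h2
    have herm1 : μ (e * star a₁) = starRingEnd ℂ (μ (a₁ * e)) := by
      have h := my_herm μ hμ_pos (star a₁) e
      rw [hse, star_star] at h
      exact h
    have herm2 : μ (star a₂ * e) = starRingEnd ℂ (μ (e * a₂)) := by
      have h := my_herm μ hμ_pos e a₂
      rw [hse] at h
      exact h
    have hm₁' := abs_le.mp hm₁
    have hm₂' := abs_le.mp hm₂
    have hP₁ : (μ ((e - a₁) * (e - star a₁))).re ≤ 2 * c₁ + 2 * δ := by
      have hexp : (e - a₁) * (e - star a₁) = e * e - e * star a₁ - a₁ * e + a₁ * star a₁ := by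
        noncomm_ring
      rw [hexp, map_add, map_sub, map_sub, herm1]
      simp only [Complex.add_re, Complex.sub_re, Complex.conj_re]
      rw [hc₁def]
      linarith
    have hP₂ : (μ ((e - star a₂) * (e - a₂))).re ≤ 2 * c₂ + 2 * δ := by
      have hexp : (e - star a₂) * (e - a₂) = e * e - e * a₂ - star a₂ * e + star a₂ * a₂ := by
        noncomm_ring
      rw [hexp, map_add, map_sub, map_sub, herm2]
      simp only [Complex.add_re, Complex.sub_re, Complex.conj_re]
      rw [hc₂def]
      linarith
    have hP₁0 : 0 ≤ (μ ((e - a₁) * (e - star a₁))).re := by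
      have heq : (e - a₁) * (e - star a₁) = star (e - star a₁) * (e - star a₁) := by
        rw [star_sub, hse, star_star]
      rw [heq]
      exact hre0 _
    have hP₂0 : 0 ≤ (μ ((e - star a₂) * (e - a₂))).re := by
      have heq : (e - star a₂) * (e - a₂) = star (e - a₂) * (e - a₂) := by
        rw [star_sub, hse]
      rw [heq]
      exact hre0 _
    have hcs := my_cs μ hμ_pos (e - star a₁) (e - a₂)
    rw [show star (e - star a₁) = e - a₁ by rw [star_sub, hse, star_star],
      show star (e - a₂) = e - star a₂ by rw [star_sub, hse]] at hcs
    set T := μ ((e - a₁) * (e - a₂)) with hT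
    have hTnorm : ‖T‖ ≤ 2 * Real.sqrt ((c₁ + δ) * (c₂ + δ)) := by
      have hsq : ‖T‖ ^ 2 ≤ (2 * c₁ + 2 * δ) * (2 * c₂ + 2 * δ) :=
        hcs.trans (mul_le_mul hP₁ hP₂ hP₂0 (by linarith))
      have hR : (2 * Real.sqrt ((c₁ + δ) * (c₂ + δ))) ^ 2 = (2 * c₁ + 2 * δ) * (2 * c₂ + 2 * δ) := by
        rw [mul_pow, Real.sq_sqrt (by positivity)]
        ring
      nlinarith [norm_nonneg T, Real.sqrt_nonneg ((c₁ + δ) * (c₂ + δ))]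
    have hTexp : T.re = (μ (e * e)).re - (μ (e * a₂)).re - (μ (a₁ * e)).re + (μ (a₁ * a₂)).re := by
      rw [hT, show (e - a₁) * (e - a₂) = e * e - e * a₂ - a₁ * e + a₁ * a₂ by noncomm_ring,
        map_add, map_sub, map_sub]
      simp only [Complex.add_re, Complex.sub_re]
    have hTre : -T.re ≤ ‖T‖ := by
      have := (abs_le.mp (Complex.abs_re_le_norm T)).1
      linarith
    rw [hc₁def, hc₂def]
    have hfin : 1 - (μ (a₁ * a₂)).re
        = 1 - T.re + (μ (e * e)).re - (μ (e * a₂)).re - (μ (a₁ * e)).re := by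
      rw [hTexp]; ring
    rw [hfin]
    have h2δ := hTnorm
    linarith
  refine le_of_forall_pos_le_add fun ε hε => ?_
  set δ := min 1 (min (ε / 8) ((ε / 8) ^ 2)) with hδdef
  have hδpos : 0 < δ := lt_min one_pos (lt_min (by positivity) (by positivity))
  have hδ1 : δ ≤ 1 := min_le_left _ _
  have hδ2 : δ ≤ ε / 8 := (min_le_right _ _).trans (min_le_left _ _)
  have hδ3 : δ ≤ (ε / 8) ^ 2 := (min_le_right _ _).trans (min_le_right _ _)
  clear_value δ
  have hkey := key δ hδpos
  have hsub : Real.sqrt ((c₁ + δ) * (c₂ + δ)) ≤ Real.sqrt (c₁ * c₂) + Real.sqrt (5 * δ) := by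
    have hle : (c₁ + δ) * (c₂ + δ) ≤ c₁ * c₂ + 5 * δ := by nlinarith
    calc Real.sqrt ((c₁ + δ) * (c₂ + δ)) ≤ Real.sqrt (c₁ * c₂ + 5 * δ) := Real.sqrt_le_sqrt hle
      _ ≤ Real.sqrt (c₁ * c₂) + Real.sqrt (5 * δ) := by
          have hA : 0 ≤ c₁ * c₂ := by positivity
          have hB : (0:ℝ) ≤ 5 * δ := by linarith
          have hsq : c₁ * c₂ + 5 * δ ≤ (Real.sqrt (c₁ * c₂) + Real.sqrt (5 * δ)) ^ 2 := by
            rw [add_sq, Real.sq_sqrt hA, Real.sq_sqrt hB]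
            nlinarith [Real.sqrt_nonneg (c₁ * c₂), Real.sqrt_nonneg (5 * δ)]
          calc Real.sqrt (c₁ * c₂ + 5 * δ)
              ≤ Real.sqrt ((Real.sqrt (c₁ * c₂) + Real.sqrt (5 * δ)) ^ 2) := Real.sqrt_le_sqrt hsq
            _ = _ := Real.sqrt_sq (by positivity)
  have hs5 : Real.sqrt (5 * δ) ≤ 3 * (ε / 8) := by
    calc Real.sqrt (5 * δ) ≤ Real.sqrt (9 * (ε / 8) ^ 2) := Real.sqrt_le_sqrt (by nlinarith)
      _ = 3 * (ε / 8) := by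
          rw [show 9 * (ε / 8) ^ 2 = (3 * (ε / 8)) ^ 2 by ring, Real.sqrt_sq (by positivity)]
  linarith
end

section
/- Every f ∈ C_c⁴(ℝ) (four times continuously differentiable, compactly supported) is a finite linear combination of functions that are both in C₀²(ℝ) and continuous positive-definite on ℝ. -/
open MeasureTheory Filter
open scoped ComplexOrder
open Real Complex
open scoped FourierTransform

lemma pd_fourier (Q : ℝ → ℝ) (hQi : Integrable Q) (hQ0 : ∀ t, 0 ≤ Q t)
    (m : ℕ) (a : Fin m → ℂ) (ξ : Fin m → ℝ) :
    0 ≤ ∑ j : Fin m, ∑ l : Fin m,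
      a j * starRingEnd ℂ (a l) * 𝓕 (fun t : ℝ ↦ (Q t : ℂ)) (ξ j - ξ l) := by
  classical
  set b : Fin m → ℝ → ℂ := fun j t ↦ a j * Complex.exp ((-2 * π * t * ξ j : ℝ) * Complex.I) with hb
  have hQc : Integrable (fun t : ℝ ↦ (Q t : ℂ)) := hQi.ofReal
  have hnorm : ∀ (j : Fin m) (t : ℝ), ‖b j t‖ = ‖a j‖ := by
    intro j t
    simp only [hb, norm_mul, Complex.norm_exp_ofReal_mul_I, mul_one]
  -- integrability of each cross term
  have hint : ∀ j l : Fin m, Integrable (fun t : ℝ ↦ b j t * (starRingEnd ℂ) (b l t) * (Q t : ℂ)) := by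
    intro j l
    apply hQc.bdd_mul (c := ‖a j‖ * ‖a l‖)
    · apply Continuous.aestronglyMeasurable
      apply Continuous.mul
      · exact (continuous_const.mul ((Complex.continuous_ofReal.comp (by fun_prop)).mul continuous_const).cexp)
      · exact continuous_conj.comp (continuous_const.mul ((Complex.continuous_ofReal.comp (by fun_prop)).mul continuous_const).cexp)
    · refine ae_of_all _ (fun t ↦ ?_)
      rw [norm_mul, hnorm, RCLike.norm_conj, hnorm]
  -- each term of the double sum is an integral
  have hterm : ∀ j l : Fin m,
      a j * starRingEnd ℂ (a l) * 𝓕 (fun t : ℝ ↦ (Q t : ℂ)) (ξ j - ξ l)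
        = ∫ t : ℝ, b j t * (starRingEnd ℂ) (b l t) * (Q t : ℂ) := by
    intro j l
    rw [Real.fourier_real_eq_integral_exp_smul]
    rw [← integral_const_mul]
    congr 1
    ext t
    rw [smul_eq_mul]
    have hconj : (starRingEnd ℂ) (b l t)
        = (starRingEnd ℂ) (a l) * Complex.exp ((2 * π * t * ξ l : ℝ) * Complex.I) := by
      simp only [hb, map_mul, ← Complex.exp_conj, map_mul, Complex.conj_ofReal, Complex.conj_I]
      push_cast
      ring_nf
    rw [hconj, hb]
    simp only
    rw [show ((-2 * π * t * (ξ j - ξ l) : ℝ) : ℂ) * Complex.I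
        = ((-2 * π * t * ξ j : ℝ) : ℂ) * Complex.I + ((2 * π * t * ξ l : ℝ) : ℂ) * Complex.I by
      push_cast; ring, Complex.exp_add]
    ring
  simp_rw [hterm]
  have hswap1 : ∀ j : Fin m, (∑ l : Fin m, ∫ t : ℝ, b j t * (starRingEnd ℂ) (b l t) * (Q t : ℂ))
      = ∫ t : ℝ, ∑ l : Fin m, b j t * (starRingEnd ℂ) (b l t) * (Q t : ℂ) :=
    fun j ↦ (integral_finset_sum _ (fun l _ ↦ hint j l)).symm
  simp_rw [hswap1]
  rw [← integral_finset_sum _ (fun j _ ↦ integrable_finset_sum _ (fun l _ ↦ hint j l))]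
  have hpt : ∀ t : ℝ, (∑ j : Fin m, ∑ l : Fin m, b j t * (starRingEnd ℂ) (b l t) * (Q t : ℂ))
      = ((Complex.normSq (∑ j : Fin m, b j t) * Q t : ℝ) : ℂ) := by
    intro t
    have : (∑ j : Fin m, ∑ l : Fin m, b j t * (starRingEnd ℂ) (b l t) * (Q t : ℂ))
        = (∑ j : Fin m, b j t) * (starRingEnd ℂ) (∑ l : Fin m, b l t) * (Q t : ℂ) := by
      rw [map_sum, Finset.sum_mul_sum]
      simp [Finset.sum_mul]
    rw [this, Complex.mul_conj]
    push_cast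
    ring
  simp_rw [hpt]
  have hcoe : (∫ t : ℝ, ((Complex.normSq (∑ j : Fin m, b j t) * Q t : ℝ) : ℂ))
      = ((∫ t : ℝ, Complex.normSq (∑ j : Fin m, b j t) * Q t : ℝ) : ℂ) := integral_ofReal
  rw [hcoe, Complex.zero_le_real]
  apply integral_nonneg
  intro t
  exact mul_nonneg (Complex.normSq_nonneg _) (hQ0 t)

/-- Every compactly supported `C⁴` function on `ℝ` is a finite linear
combination of functions lying in `C₀²(ℝ)` (twice continuously differentiable,
vanishing at infinity together with the first two derivatives) that are
continuous positive-definite functions on `ℝ`. -/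
theorem stmt14 (f : ℝ → ℂ) (hf : ContDiff ℝ 4 f) (hsupp : HasCompactSupport f) :
    ∃ (n : ℕ) (c : Fin n → ℂ) (g : Fin n → ℝ → ℂ),
      (∀ i : Fin n,
        ContDiff ℝ 2 (g i) ∧
        (∀ k : ℕ, k ≤ 2 → Tendsto (iteratedDeriv k (g i)) (cocompact ℝ) (nhds 0)) ∧
        Continuous (g i) ∧
        (∀ (m : ℕ) (a : Fin m → ℂ) (ξ : Fin m → ℝ),
          0 ≤ ∑ j : Fin m, ∑ l : Fin m,
            a j * starRingEnd ℂ (a l) * g i (ξ j - ξ l))) ∧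
      f = fun x : ℝ => ∑ i : Fin n, c i * g i x := by
  classical
  have hcont : Continuous f := hf.continuous
  have hfi : Integrable f := hcont.integrable_of_hasCompactSupport hsupp
  -- integrability of iterated derivatives
  have hdersupp : ∀ n : ℕ, HasCompactSupport (iteratedDeriv n f) := by
    intro n
    have : iteratedDeriv n f = (fun L : (ContinuousMultilinearMap ℝ (fun _ : Fin n ↦ ℝ) ℂ) ↦
        L (fun _ ↦ 1)) ∘ (iteratedFDeriv ℝ n f) := by
      ext x; rfl
    rw [this]
    exact (hsupp.iteratedFDeriv n).comp_left rfl
  have hder : ∀ n : ℕ, (n : ℕ∞) ≤ 4 → Integrable (iteratedDeriv n f) := by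
    intro n hn
    have hn' : n ≤ 4 := by exact_mod_cast hn
    exact ((hf.continuous_iteratedDeriv n (by exact_mod_cast hn')).integrable_of_hasCompactSupport
      (hdersupp n))
  -- pointwise decay bound for 𝓕 f
  set C0 : ℝ := ∫ t : ℝ, ‖f t‖ with hC0
  set C4 : ℝ := ∫ t : ℝ, ‖iteratedDeriv 4 f t‖ with hC4
  set M : ℝ := C0 + C4 / (2 * π) ^ 4 with hM
  have hFb : ∀ w : ℝ, ‖𝓕 f w‖ ≤ C0 := fun w ↦
    VectorFourier.norm_fourierIntegral_le_integral_norm _ _ _ _ _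
  have hF4 : ∀ w : ℝ, w ^ 4 * ‖𝓕 f w‖ ≤ C4 / (2 * π) ^ 4 := by
    intro w
    have h1 : 𝓕 (iteratedDeriv 4 f) w = (2 * π * Complex.I * w) ^ 4 • (𝓕 f w) := by
      rw [Real.fourier_iteratedDeriv (N := (4 : ℕ∞)) hf hder le_rfl]
    have h2 : ‖𝓕 (iteratedDeriv 4 f) w‖ ≤ C4 :=
      VectorFourier.norm_fourierIntegral_le_integral_norm _ _ _ _ _
    rw [h1] at h2
    rw [norm_smul] at h2
    have h3 : ‖(2 * π * Complex.I * w) ^ 4‖ = (2 * π) ^ 4 * w ^ 4 := by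
      rw [norm_pow]
      have : ‖(2 * π * Complex.I * w : ℂ)‖ = (2 * π) * |w| := by
        simp [norm_mul, Complex.norm_real, abs_of_pos Real.pi_pos, Real.pi_nonneg]
      rw [this, mul_pow]
      congr 1
      rw [← _root_.abs_pow, _root_.abs_of_nonneg (by positivity)]
    rw [h3] at h2
    rw [le_div_iff₀ (by positivity)]
    nlinarith
  have key : ∀ w : ℝ, (1 + w ^ 4) * ‖𝓕 f w‖ ≤ M := by
    intro w
    have := hF4 w
    have := hFb w
    have h := norm_nonneg (𝓕 f w)
    rw [hM]
    nlinarith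
  -- the inverse Fourier transform G and its decay
  set G : ℝ → ℂ := 𝓕⁻ f with hG
  have hGF : ∀ x : ℝ, G x = 𝓕 f (-x) := fun x ↦ Real.fourierInv_eq_fourier_neg f x
  have hFcont : Continuous (𝓕 f) :=
    VectorFourier.fourierIntegral_continuous Real.continuous_fourierChar
      (by exact continuous_inner) hfi
  have hGcont : Continuous G := by
    rw [show G = fun x ↦ 𝓕 f (-x) from funext hGF]
    exact hFcont.comp continuous_neg
  have hGkey : ∀ w : ℝ, (1 + w ^ 4) * ‖G w‖ ≤ M := by
    intro w
    rw [hGF]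
    have h := key (-w)
    have : (-w) ^ 4 = w ^ 4 := by ring
    rwa [this] at h
  have hGk : ∀ k : ℕ, k ≤ 2 → Integrable (fun x : ℝ ↦ ‖x‖ ^ k * ‖G x‖) := by
    intro k hk
    have hMnn : 0 ≤ M := le_trans (by positivity) (hGkey 0)
    apply Integrable.mono' ((integrable_inv_one_add_sq).const_mul (4 * M))
    · exact ((continuous_norm.pow k).mul hGcont.norm).aestronglyMeasurable
    · filter_upwards with x
      have h1 : (0:ℝ) < 1 + x ^ 2 := by positivity
      rw [Real.norm_of_nonneg (by positivity)]
      have h2 := hGkey x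
      have h3 : ‖x‖ ^ k * (1 + x ^ 2) ≤ 4 * (1 + x ^ 4) := by
        rw [Real.norm_eq_abs]
        have hx2 : |x| ^ 2 = x ^ 2 := sq_abs x
        have hx0 : 0 ≤ |x| := abs_nonneg x
        interval_cases k
        · nlinarith [sq_nonneg x, sq_nonneg (x ^ 2 - 1)]
        · nlinarith [sq_nonneg (|x| - 1), sq_nonneg (x ^ 2 - 1), sq_nonneg (|x| * x ^ 2 - 1), sq_nonneg x]
        · nlinarith [sq_nonneg (x ^ 2 - 1), sq_nonneg x]
      have h4 : 0 ≤ ‖G x‖ := norm_nonneg _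
      rw [show (4 * M * (1 + x ^ 2)⁻¹ : ℝ) = 4 * M / (1 + x ^ 2) by ring, le_div_iff₀ h1]
      nlinarith [mul_le_mul_of_nonneg_right h3 h4, mul_le_mul_of_nonneg_left h2 (by norm_num : (0:ℝ) ≤ 4)]
  have hGint : Integrable G := by
    have h := hGk 0 (by norm_num)
    simp only [pow_zero, one_mul] at h
    exact (integrable_norm_iff hGcont.aestronglyMeasurable).1 h
  have hFt_int : Integrable (𝓕 f) := by
    have : (𝓕 f) = fun x ↦ G (-x) := by
      ext x; rw [hGF, neg_neg]
    rw [this]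
    exact hGint.comp_neg
  -- decomposition of G into four nonnegative parts
  set P : Fin 4 → ℝ → ℝ := ![fun x ↦ max (G x).re 0, fun x ↦ max (-(G x).re) 0,
    fun x ↦ max (G x).im 0, fun x ↦ max (-(G x).im) 0] with hP
  set c : Fin 4 → ℂ := ![1, -1, Complex.I, -Complex.I] with hc
  have hPcont : ∀ i, Continuous (P i) := by
    intro i
    have h1 := Complex.continuous_re.comp hGcont
    have h2 := Complex.continuous_im.comp hGcont
    fin_cases i
    · exact (h1.max continuous_const)
    · exact (h1.neg.max continuous_const)
    · exact (h2.max continuous_const)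
    · exact (h2.neg.max continuous_const)
  have hP0 : ∀ i t, 0 ≤ P i t := by
    intro i t
    fin_cases i <;> exact le_max_right _ _
  have hPle : ∀ i t, ‖P i t‖ ≤ ‖G t‖ := by
    intro i t
    have haux : ∀ r : ℝ, r ≤ ‖G t‖ → ‖max r 0‖ ≤ ‖G t‖ := by
      intro r hr
      rw [Real.norm_of_nonneg (le_max_right _ _)]
      exact max_le hr (norm_nonneg _)
    have hre : |(G t).re| ≤ ‖G t‖ := Complex.abs_re_le_norm _
    have him : |(G t).im| ≤ ‖G t‖ := Complex.abs_im_le_norm _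
    fin_cases i
    · exact haux _ ((le_abs_self _).trans hre)
    · exact haux _ ((neg_le_abs _).trans hre)
    · exact haux _ ((le_abs_self _).trans him)
    · exact haux _ ((neg_le_abs _).trans him)
  have hPk : ∀ i, ∀ k : ℕ, k ≤ 2 → Integrable (fun x : ℝ ↦ ‖x‖ ^ k * ‖P i x‖) := by
    intro i k hk
    apply (hGk k hk).mono' (((continuous_norm.pow k).mul (hPcont i).norm).aestronglyMeasurable)
    filter_upwards with x
    simp only [Pi.mul_apply, Pi.pow_apply]
    rw [Real.norm_of_nonneg (by positivity : (0:ℝ) ≤ ‖x‖ ^ k * ‖P i x‖)]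
    exact mul_le_mul_of_nonneg_left (hPle i x) (by positivity : (0:ℝ) ≤ ‖x‖ ^ k)
  have hQmeas : ∀ i, Continuous (fun t : ℝ ↦ ((P i t : ℝ) : ℂ)) := fun i ↦
    Complex.continuous_ofReal.comp (hPcont i)
  have hQint0 : ∀ i, Integrable (fun t : ℝ ↦ ((P i t : ℝ) : ℂ)) := by
    intro i
    have h := hPk i 0 (by norm_num)
    simp only [pow_zero, one_mul] at h
    have hPi : Integrable (P i) :=
      (integrable_norm_iff (hPcont i).aestronglyMeasurable).1 h
    exact hPi.ofReal
  have hQint : ∀ i (k : ℕ), (k : ℕ∞) ≤ 2 → Integrable (fun x : ℝ ↦ x ^ k • ((P i x : ℝ) : ℂ)) := by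
    intro i k hk
    have hk' : k ≤ 2 := by exact_mod_cast hk
    rw [← integrable_norm_iff (by apply Continuous.aestronglyMeasurable; fun_prop)]
    have : (fun x : ℝ ↦ ‖x ^ k • ((P i x : ℝ) : ℂ)‖) = fun x : ℝ ↦ ‖x‖ ^ k * ‖P i x‖ := by
      ext x
      rw [norm_smul, norm_pow, Complex.norm_real]
    rw [this]
    exact hPk i k hk'
  have hQnrm : ∀ i (n : ℕ), (n : ℕ∞) ≤ 2 →
      Integrable (fun v : ℝ ↦ ‖v‖ ^ n * ‖((P i v : ℝ) : ℂ)‖) := by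
    intro i n hn
    have hn' : n ≤ 2 := by exact_mod_cast hn
    simpa only [Complex.norm_real] using hPk i n hn'
  -- the four building blocks
  set g : Fin 4 → ℝ → ℂ := fun i ↦ 𝓕 (fun t : ℝ ↦ ((P i t : ℝ) : ℂ)) with hg
  have hgC2 : ∀ i, ContDiff ℝ 2 (g i) := fun i ↦
    Real.contDiff_fourier (N := 2) (hQnrm i)
  refine ⟨4, c, g, fun i ↦ ⟨hgC2 i, ?_, (hgC2 i).continuous, ?_⟩, ?_⟩
  · -- vanishing of derivatives at infinity
    intro k hk
    rw [Real.iteratedDeriv_fourier (N := 2) (hQint i) (by exact_mod_cast hk)]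
    exact Real.zero_at_infty_fourier _
  · -- positive definiteness
    intro m a ξ
    exact pd_fourier (P i) ((integrable_norm_iff (hPcont i).aestronglyMeasurable).1
      (by simpa only [pow_zero, one_mul] using hPk i 0 (by norm_num))) (hP0 i) m a ξ
  · -- the decomposition of f
    have hdecomp : ∀ t : ℝ, G t = ∑ i : Fin 4, c i * ((P i t : ℝ) : ℂ) := by
      intro t
      rw [Fin.sum_univ_four]
      simp only [hP, hc, Matrix.cons_val_zero, Matrix.cons_val_one, Matrix.head_cons,
        Matrix.cons_val_two, Matrix.tail_cons, Matrix.cons_val_three]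
      apply Complex.ext
      · simp only [Complex.add_re, Complex.mul_re, Complex.one_re, Complex.one_im,
          Complex.neg_re, Complex.neg_im, Complex.I_re, Complex.I_im, Complex.ofReal_re,
          Complex.ofReal_im]
        ring_nf
        exact (max_zero_sub_max_neg_zero_eq_self _).symm
      · simp only [Complex.add_im, Complex.mul_im, Complex.one_re, Complex.one_im,
          Complex.neg_re, Complex.neg_im, Complex.I_re, Complex.I_im, Complex.ofReal_re,
          Complex.ofReal_im]
        ring_nf
        simp [← sub_eq_add_neg, max_zero_sub_max_neg_zero_eq_self]
    have hinv : 𝓕 G = f := hcont.fourier_fourierInv_eq hfi hFt_int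
    rw [← hinv]
    ext x
    rw [Real.fourier_real_eq_integral_exp_smul]
    have hpt : ∀ t : ℝ, Complex.exp ((-2 * π * t * x : ℝ) * Complex.I) • G t
        = ∑ i : Fin 4, c i * (Complex.exp ((-2 * π * t * x : ℝ) * Complex.I) • ((P i t : ℝ) : ℂ)) := by
      intro t
      rw [hdecomp t, smul_eq_mul, Finset.mul_sum]
      congr 1
      ext i
      rw [smul_eq_mul]
      ring
    simp_rw [hpt]
    rw [integral_finset_sum]
    · congr 1
      ext i
      rw [show (fun t : ℝ ↦ c i * (Complex.exp ((-2 * π * t * x : ℝ) * Complex.I) • ((P i t : ℝ) : ℂ)))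
          = fun t : ℝ ↦ c i * (Complex.exp ((-2 * π * t * x : ℝ) * Complex.I) • ((P i t : ℝ) : ℂ)) from rfl]
      rw [integral_const_mul]
      congr 1
      rw [hg]
      exact (Real.fourier_real_eq_integral_exp_smul _ x).symm
    · intro i _
      apply Integrable.const_mul
      simp_rw [smul_eq_mul]
      apply (hQint0 i).bdd_mul (c := 1)
      · apply Continuous.aestronglyMeasurable
        exact ((Complex.continuous_ofReal.comp (by fun_prop)).mul continuous_const).cexp
      · exact ae_of_all _ (fun t ↦ le_of_eq (Complex.norm_exp_ofReal_mul_I _))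
end
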